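/- Let Γ_H be the H-shaped tree with positive travel times t_1,…,t_5 and set S := T − t_3. Then for every real T: B(Γ_H, B, S) + 2·W(2t_1,2t_2;S) + 2·#{(n_1,n_2,n_4) ∈ ℕ^3 : n_4 ≥ 1, n_1+n_2 ≥ 1, 2n_1t_1+2n_2t_2+2n_4t_4 ≤ S} + 2·#{(n_1,n_2,n_5) ∈ ℕ^3 : n_5 ≥ 1, n_1+n_2 ≥ 1, 2n_1t_1+2n_2t_2+2n_5t_5 ≤ S} + #{(n_1,n_2,n_4,n_5) ∈ ℕ^4 : n_4 ≥ 1, n_5 ≥ 1, n_1+n_2 ≥ 1, 2n_1t_1+2n_2t_2+2n_4t_4+2n_5t_5 ≤ S} = W(2t_1,2t_2,2t_3,2t_4;S) + W(2t_1,2t_2,2t_3,2t_5;S) + W(2t_1,2t_2,2t_4,2t_5;S) − W(2t_1,2t_2;S). (The left-hand side is the number N(Γ_H, A, B, T) of new points born at B up to time T for a point starting from A, when the travel times are linearly independent over ℚ.) -/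

import Mathlib

open SimpleGraph

/-- `F` is the edge set of a rooted subtree (a connected subgraph containing the root `X`,
determined by its edge set) of the graph `G`. -/
def IsRootedSubtree {V : Type*} (G : SimpleGraph V) (X : V) (F : Set (Sym2 V)) : Prop :=
  F ⊆ G.edgeSet ∧ ∀ v : V, (∃ e ∈ F, v ∈ e) → (SimpleGraph.fromEdgeSet F).Reachable X v

-- `B(G, X, T)`: the sum, over all pairs `(Γ', n)` where `Γ'` is a rooted subtree (root `X`)
-- with nonempty edge set `F` and `n` assigns a positive integer to every edge of `Γ'` with
-- `∑_{e ∈ F} 2 n_e t_e ≤ T`, of the weight `deg X - r(Γ')`, where `r(Γ')` is the number of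
-- edges of `Γ'` incident to `X`.
open scoped Classical in
noncomputable def Bcount {V : Type*} [Fintype V] [DecidableEq V]
    (G : SimpleGraph V) (X : V) (t : Sym2 V → ℝ) (T : ℝ) : ℤ :=
  ∑ F : Finset (Sym2 V),
    if IsRootedSubtree G X ↑F ∧ F.Nonempty then
      ((Nat.card {w : V | G.Adj X w} : ℤ) - ((F.filter (fun e => X ∈ e)).card : ℤ)) *
        (Nat.card {n : Sym2 V → ℕ |
          (∀ e ∈ F, 1 ≤ n e) ∧ (∀ e ∉ F, n e = 0) ∧
          ∑ e ∈ F, (n e : ℝ) * (2 * t e) ≤ T} : ℤ)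
    else 0

/-- `W(s₁, …, s_m; T)`: the number of `m`-tuples of nonnegative integers `(n₁, …, n_m)` with
`s₁ n₁ + ⋯ + s_m n_m ≤ T`. -/
noncomputable def W {m : ℕ} (s : Fin m → ℝ) (T : ℝ) : ℕ :=
  Nat.card {n : Fin m → ℕ | ∑ i, (n i : ℝ) * s i ≤ T}

/-- The H-shaped tree `Γ_H`: inner vertices `A = 0` and `B = 1`; pendant edges
`e₁ = s(0,2)`, `e₂ = s(0,3)` at `A`; the jumper `e₃ = s(0,1)`; pendant edges
`e₄ = s(1,4)`, `e₅ = s(1,5)` at `B`. -/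
def GammaH : SimpleGraph (Fin 6) :=
  SimpleGraph.fromEdgeSet {s(0, 2), s(0, 3), s(0, 1), s(1, 4), s(1, 5)}

set_option linter.unusedSectionVars false

namespace HAux

variable {α β : Type*} [Fintype α] [DecidableEq α]

def supp (n : α → ℕ) : Finset α := Finset.univ.filter fun a => n a ≠ 0

lemma supp_eq_iff {n : α → ℕ} {J : Finset α} :
    supp n = J ↔ (∀ a ∉ J, n a = 0) ∧ (∀ a ∈ J, 1 ≤ n a) := by
  simp only [supp, Finset.ext_iff, Finset.mem_filter, Finset.mem_univ, true_and]
  constructor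
  · intro h
    exact ⟨fun a ha => by by_contra h0; exact ha ((h a).1 h0),
      fun a ha => Nat.one_le_iff_ne_zero.2 ((h a).2 ha)⟩
  · rintro ⟨h0, h1⟩ a
    constructor
    · intro ha; by_contra haJ; exact ha (h0 a haJ)
    · intro ha; exact Nat.one_le_iff_ne_zero.1 (h1 a ha)

lemma finite_le (s : α → ℝ) (hs : ∀ a, 0 < s a) (S : ℝ) :
    {n : α → ℕ | ∑ a, (n a : ℝ) * s a ≤ S}.Finite := by
  apply Set.Finite.subset
    (Set.Finite.pi (fun a => Set.finite_Iic (Nat.floor (S / s a))))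
  intro n hn
  simp only [Set.mem_pi, Set.mem_univ, forall_true_left, Set.mem_Iic]
  intro a
  refine Nat.le_floor ((le_div_iff₀ (hs a)).2 ?_)
  refine le_trans (Finset.single_le_sum (f := fun i => (n i : ℝ) * s i)
    (fun i _ => mul_nonneg (Nat.cast_nonneg _) (hs i).le) (Finset.mem_univ a)) hn

lemma part_card (s : α → ℝ) (hs : ∀ a, 0 < s a) (S : ℝ)
    (q : Finset α → Prop) [DecidablePred q] :
    Nat.card {n : α → ℕ | q (supp n) ∧ ∑ a, (n a : ℝ) * s a ≤ S}
      = ∑ J ∈ Finset.univ.powerset.filter q,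
          Nat.card {n : α → ℕ |
            (∀ a ∉ J, n a = 0) ∧ (∀ a ∈ J, 1 ≤ n a) ∧ ∑ a, (n a : ℝ) * s a ≤ S} := by
  classical
  have hfin0 := finite_le s hs S
  have hfin : {n : α → ℕ | q (supp n) ∧ ∑ a, (n a : ℝ) * s a ≤ S}.Finite :=
    hfin0.subset (fun n hn => hn.2)
  rw [Nat.card_coe_set_eq, Set.ncard_eq_toFinset_card _ hfin]
  rw [Finset.card_eq_sum_card_fiberwise
    (f := supp) (t := Finset.univ.powerset.filter q)
    (fun n hn => by
      simp only [Finset.mem_coe, Set.Finite.mem_toFinset, Set.mem_setOf_eq] at hn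
      exact Finset.mem_filter.2 ⟨Finset.mem_powerset.2 (Finset.subset_univ _), hn.1⟩)]
  refine Finset.sum_congr rfl (fun J hJ => ?_)
  have hqJ : q J := (Finset.mem_filter.1 hJ).2
  have hfinA : {n : α → ℕ |
      (∀ a ∉ J, n a = 0) ∧ (∀ a ∈ J, 1 ≤ n a) ∧ ∑ a, (n a : ℝ) * s a ≤ S}.Finite :=
    hfin0.subset (fun n hn => hn.2.2)
  rw [Nat.card_coe_set_eq, Set.ncard_eq_toFinset_card _ hfinA]
  congr 1
  ext n
  simp only [Finset.mem_filter, Set.Finite.mem_toFinset, Set.mem_setOf_eq]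
  constructor
  · rintro ⟨⟨hq, hsum⟩, hsupp⟩
    obtain ⟨h0, h1⟩ := supp_eq_iff.1 hsupp
    exact ⟨h0, h1, hsum⟩
  · rintro ⟨h0, h1, hsum⟩
    have hsupp : supp n = J := supp_eq_iff.2 ⟨h0, h1⟩
    exact ⟨⟨hsupp ▸ hqJ, hsum⟩, hsupp⟩

variable [Fintype β] [DecidableEq β]

lemma sum_emb (ι : α ↪ β) (s : α → ℝ) (s' : β → ℝ) (hs : ∀ a, s' (ι a) = s a)
    (J : Finset α) (n : β → ℕ) (h0 : ∀ b ∉ J.map ι, n b = 0) :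
    ∑ b ∈ J.map ι, (n b : ℝ) * s' b = ∑ a, (n (ι a) : ℝ) * s a := by
  rw [Finset.sum_subset (Finset.map_subset_map.2 (Finset.subset_univ J))
    (fun b _ hb => by rw [h0 b hb]; simp)]
  rw [Finset.sum_map]
  exact Finset.sum_congr rfl (fun a _ => by rw [hs])

lemma card_emb (ι : α ↪ β) (s : α → ℝ) (s' : β → ℝ) (hs : ∀ a, s' (ι a) = s a)
    (J : Finset α) (S : ℝ) :
    Nat.card {n : β → ℕ | (∀ b ∈ J.map ι, 1 ≤ n b) ∧ (∀ b ∉ J.map ι, n b = 0) ∧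
        ∑ b ∈ J.map ι, (n b : ℝ) * s' b ≤ S}
      = Nat.card {n : α → ℕ |
          (∀ a ∉ J, n a = 0) ∧ (∀ a ∈ J, 1 ≤ n a) ∧ ∑ a, (n a : ℝ) * s a ≤ S} := by
  classical
  set E : (α → ℕ) → (β → ℕ) := fun m b => ∑ a, if ι a = b then m a else 0 with hEdef
  have hE : ∀ (m : α → ℕ) (a : α), E m (ι a) = m a := by
    intro m a
    simp [hEdef, ι.injective.eq_iff, Finset.sum_ite_eq' Finset.univ a m]
  have hEz : ∀ (m : α → ℕ), (∀ a ∉ J, m a = 0) → ∀ b ∉ J.map ι, E m b = 0 := by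
    intro m h0 b hb
    refine Finset.sum_eq_zero (fun a _ => ?_)
    split_ifs with h
    · exact h0 a (fun haJ => hb (h ▸ Finset.mem_map_of_mem ι haJ))
    · rfl
  refine Nat.card_congr ⟨fun x => ⟨fun a => x.1 (ι a), ?_⟩, fun y => ⟨E y.1, ?_⟩, ?_, ?_⟩
  · obtain ⟨n, h1, h0, hsum⟩ := x
    refine ⟨fun a ha => h0 _ (fun hmem => ?_), fun a ha => h1 _ (Finset.mem_map_of_mem ι ha), ?_⟩
    · obtain ⟨a', ha', he⟩ := Finset.mem_map.1 hmem
      exact ha (ι.injective he ▸ ha')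
    · show ∑ a, (n (ι a) : ℝ) * s a ≤ S
      rw [← sum_emb ι s s' hs J n h0]; exact hsum
  · obtain ⟨m, h0, h1, hsum⟩ := y
    have hz := hEz m h0
    refine ⟨fun b hb => ?_, hz, ?_⟩
    · obtain ⟨a, haJ, he⟩ := Finset.mem_map.1 hb
      rw [← he, hE]; exact h1 a haJ
    · rw [sum_emb ι s s' hs J _ hz]
      have hterm : ∀ a : α, ((E m (ι a) : ℕ) : ℝ) * s a = (m a : ℝ) * s a := fun a => by rw [hE]
      rw [Finset.sum_congr rfl (fun a _ => hterm a)]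
      exact hsum
  · rintro ⟨n, h1, h0, hsum⟩
    ext b
    show E (fun a => n (ι a)) b = n b
    by_cases hb : b ∈ J.map ι
    · obtain ⟨a, haJ, he⟩ := Finset.mem_map.1 hb
      rw [← he, hE]
    · rw [h0 b hb]
      refine Finset.sum_eq_zero (fun a _ => ?_)
      split_ifs with h
      · exact h0 (ι a) (h.symm ▸ hb)
      · rfl
  · rintro ⟨m, h0, h1, hsum⟩
    ext a
    show E m (ι a) = m a
    exact hE m a

lemma reshape (s' : β → ℝ) (G : Finset β) (S : ℝ) :
    {n : β → ℕ | (∀ b ∉ G, n b = 0) ∧ (∀ b ∈ G, 1 ≤ n b) ∧ ∑ b, (n b : ℝ) * s' b ≤ S}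
      = {n : β → ℕ | (∀ b ∈ G, 1 ≤ n b) ∧ (∀ b ∉ G, n b = 0) ∧
          ∑ b ∈ G, (n b : ℝ) * s' b ≤ S} := by
  ext n
  simp only [Set.mem_setOf_eq]
  constructor
  · rintro ⟨h0, h1, hs⟩
    refine ⟨h1, h0, ?_⟩
    rw [Finset.sum_subset (Finset.subset_univ G)
      (fun b _ hb => by rw [h0 b hb, Nat.cast_zero, zero_mul])]
    exact hs
  · rintro ⟨h1, h0, hs⟩
    refine ⟨h0, h1, ?_⟩
    rw [← Finset.sum_subset (Finset.subset_univ G)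
      (fun b _ hb => by rw [h0 b hb, Nat.cast_zero, zero_mul])]
    exact hs

lemma exists_preimage (ι : α ↪ β) (J : Finset β) (hJ : J ⊆ Finset.univ.map ι) :
    ∃ K : Finset α, K.map ι = J := by
  classical
  refine ⟨Finset.univ.filter (fun a => ι a ∈ J), ?_⟩
  ext b
  simp only [Finset.mem_map, Finset.mem_filter, Finset.mem_univ, true_and]
  constructor
  · rintro ⟨a, haJ, rfl⟩; exact haJ
  · intro hb
    obtain ⟨a, _, rfl⟩ := Finset.mem_map.1 (hJ hb)
    exact ⟨a, hb, rfl⟩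

lemma powerset_map_eq (ι : α ↪ β) :
    (Finset.univ.map ι).powerset
      = (Finset.univ : Finset α).powerset.image (Finset.map ι) := by
  classical
  ext J
  simp only [Finset.mem_powerset, Finset.mem_image]
  constructor
  · intro h
    obtain ⟨K, rfl⟩ := exists_preimage ι J h
    exact ⟨K, Finset.subset_univ K, rfl⟩
  · rintro ⟨K, _, rfl⟩
    exact Finset.map_subset_map.2 (Finset.subset_univ K)

end HAux

namespace HMain
open HAux

noncomputable def s5 (t₁ t₂ t₃ t₄ t₅ : ℝ) : Fin 5 → ℝ := ![2*t₁, 2*t₂, 2*t₃, 2*t₄, 2*t₅]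

noncomputable def PP (t₁ t₂ t₃ t₄ t₅ S : ℝ) (J : Finset (Fin 5)) : ℕ :=
  Nat.card {n : Fin 5 → ℕ | (∀ i ∉ J, n i = 0) ∧ (∀ i ∈ J, 1 ≤ n i) ∧
    ∑ i, (n i : ℝ) * s5 t₁ t₂ t₃ t₄ t₅ i ≤ S}

lemma PP_emb {m : ℕ} (t₁ t₂ t₃ t₄ t₅ S : ℝ) (ι : Fin m ↪ Fin 5) (s : Fin m → ℝ)
    (hs : ∀ a, s5 t₁ t₂ t₃ t₄ t₅ (ι a) = s a) (K : Finset (Fin m)) :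
    (PP t₁ t₂ t₃ t₄ t₅ S (K.map ι) : ℤ)
      = (Nat.card {n : Fin m → ℕ |
          (∀ a ∉ K, n a = 0) ∧ (∀ a ∈ K, 1 ≤ n a) ∧ ∑ a, (n a : ℝ) * s a ≤ S} : ℤ) := by
  rw [PP, reshape, card_emb ι s (s5 t₁ t₂ t₃ t₄ t₅) hs K S]

lemma master {m : ℕ} (t₁ t₂ t₃ t₄ t₅ S : ℝ) (ι : Fin m ↪ Fin 5) (s : Fin m → ℝ)
    (hs : ∀ a, s5 t₁ t₂ t₃ t₄ t₅ (ι a) = s a) (hpos : ∀ a, 0 < s a)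
    (q : Finset (Fin m) → Prop) [DecidablePred q]
    (q' : Finset (Fin 5) → Prop) [DecidablePred q']
    (hq : ∀ K : Finset (Fin m), q' (K.map ι) ↔ q K)
    (hq0 : ∀ J : Finset (Fin 5), ¬ J ⊆ Finset.univ.map ι → ¬ q' J) :
    (Nat.card {n : Fin m → ℕ | q (supp n) ∧ ∑ a, (n a : ℝ) * s a ≤ S} : ℤ)
      = ∑ J : Finset (Fin 5), (if q' J then 1 else 0 : ℤ) * PP t₁ t₂ t₃ t₄ t₅ S J := by
  classical
  rw [part_card s hpos S q]
  push_cast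
  rw [Finset.sum_filter]
  have step1 : ∀ K ∈ (Finset.univ : Finset (Fin m)).powerset,
      (if q K then (Nat.card {n : Fin m → ℕ |
          (∀ a ∉ K, n a = 0) ∧ (∀ a ∈ K, 1 ≤ n a) ∧ ∑ a, (n a : ℝ) * s a ≤ S} : ℤ) else 0)
        = (if q' (K.map ι) then 1 else 0 : ℤ) * PP t₁ t₂ t₃ t₄ t₅ S (K.map ι) := by
    intro K _
    rw [PP_emb t₁ t₂ t₃ t₄ t₅ S ι s hs K]
    by_cases h : q K
    · rw [if_pos h, if_pos ((hq K).2 h), one_mul]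
    · rw [if_neg h, if_neg (fun h' => h ((hq K).1 h')), zero_mul]
  rw [Finset.sum_congr rfl step1]
  have hinj : ∀ x ∈ (Finset.univ : Finset (Fin m)).powerset,
      ∀ y ∈ (Finset.univ : Finset (Fin m)).powerset,
      Finset.map ι x = Finset.map ι y → x = y :=
    fun x _ y _ h => Finset.map_injective ι h
  rw [← Finset.sum_image (f := fun J => (if q' J then 1 else 0 : ℤ) * (PP t₁ t₂ t₃ t₄ t₅ S J : ℤ)) hinj]
  refine Finset.sum_subset (Finset.subset_univ _) (fun J _ hJ => ?_)
  have hns : ¬ J ⊆ Finset.univ.map ι := by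
    intro hsub
    obtain ⟨K, rfl⟩ := exists_preimage ι J hsub
    exact hJ (Finset.mem_image.2 ⟨K, Finset.mem_powerset.2 (Finset.subset_univ K), rfl⟩)
  rw [if_neg (hq0 J hns), zero_mul]

instance instAdjF (F : Finset (Sym2 (Fin 6))) :
    DecidableRel (fromEdgeSet (↑F : Set (Sym2 (Fin 6)))).Adj :=
  fun v w => decidable_of_iff (s(v,w) ∈ F ∧ v ≠ w) (by simp [fromEdgeSet_adj])

def E5 : Finset (Sym2 (Fin 6)) := {s(0, 2), s(0, 3), s(0, 1), s(1, 4), s(1, 5)}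

def eEmb : Fin 5 ↪ Sym2 (Fin 6) :=
  ⟨![s(0,2), s(0,3), s(0,1), s(1,4), s(1,5)], by decide⟩

lemma hE5map : E5 = Finset.univ.map eEmb := by decide

lemma hedge : GammaH.edgeSet = ↑E5 := by
  rw [GammaH, edgeSet_fromEdgeSet]
  ext e
  simp only [Set.mem_diff, Set.mem_insert_iff, Set.mem_singleton_iff, Set.mem_setOf_eq,
    E5, Finset.coe_insert, Finset.coe_singleton]
  constructor
  · rintro ⟨h, _⟩; exact h
  · intro h
    refine ⟨h, ?_⟩
    rcases h with h|h|h|h|h <;> subst h <;> decide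

lemma RST_iff (F : Finset (Sym2 (Fin 6))) :
    IsRootedSubtree GammaH 1 ↑F ↔ (F ⊆ E5 ∧ ∀ v : Fin 6,
      (∃ e ∈ F, v ∈ e) → (fromEdgeSet (↑F : Set (Sym2 (Fin 6)))).Reachable 1 v) := by
  unfold IsRootedSubtree
  rw [hedge]
  simp [Finset.coe_subset]

def DJ (J : Finset (Fin 5)) : Prop := J.Nonempty ∧ ((0 ∈ J ∨ 1 ∈ J) → 2 ∈ J)

instance : DecidablePred DJ := fun J => by unfold DJ; infer_instance

lemma COND (K : Finset (Fin 5)) :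
    (IsRootedSubtree GammaH 1 ↑(K.map eEmb) ∧ (K.map eEmb).Nonempty) ↔ DJ K := by
  rw [RST_iff]
  revert K
  decide

instance instAdjG : DecidableRel GammaH.Adj := fun v w =>
  decidable_of_iff (s(v,w) ∈ E5) (by rw [← Finset.mem_coe, ← hedge, mem_edgeSet])

lemma hdeg : Nat.card {w : Fin 6 | GammaH.Adj 1 w} = 3 := by
  have hadj : ∀ v : Fin 6, GammaH.Adj 1 v ↔ v ∈ ({0,4,5} : Finset (Fin 6)) := by decide
  have hset : {w : Fin 6 | GammaH.Adj 1 w} = (↑({0,4,5} : Finset (Fin 6)) : Set (Fin 6)) := by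
    ext v; simpa using hadj v
  rw [hset, Nat.card_coe_set_eq, Set.ncard_coe_finset]
  decide

lemma hs_t (t₁ t₂ t₃ t₄ t₅ : ℝ) (t : Sym2 (Fin 6) → ℝ)
    (he₁ : t s(0, 2) = t₁) (he₂ : t s(0, 3) = t₂) (he₃ : t s(0, 1) = t₃)
    (he₄ : t s(1, 4) = t₄) (he₅ : t s(1, 5) = t₅) :
    ∀ a : Fin 5, (fun e => 2 * t e) (eEmb a) = s5 t₁ t₂ t₃ t₄ t₅ a := by
  intro a
  fin_cases a <;> simp [eEmb, s5, he₁, he₂, he₃, he₄, he₅]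

lemma count_eq (t₁ t₂ t₃ t₄ t₅ : ℝ) (t : Sym2 (Fin 6) → ℝ)
    (he₁ : t s(0, 2) = t₁) (he₂ : t s(0, 3) = t₂) (he₃ : t s(0, 1) = t₃)
    (he₄ : t s(1, 4) = t₄) (he₅ : t s(1, 5) = t₅) (S : ℝ) (K : Finset (Fin 5)) :
    Nat.card {n : Sym2 (Fin 6) → ℕ | (∀ e ∈ K.map eEmb, 1 ≤ n e) ∧
        (∀ e ∉ K.map eEmb, n e = 0) ∧ ∑ e ∈ K.map eEmb, (n e : ℝ) * (2 * t e) ≤ S}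
      = PP t₁ t₂ t₃ t₄ t₅ S K := by
  rw [card_emb eEmb (s5 t₁ t₂ t₃ t₄ t₅) (fun e => 2 * t e)
    (hs_t t₁ t₂ t₃ t₄ t₅ t he₁ he₂ he₃ he₄ he₅) K S, PP]

open scoped Classical in
lemma Bpart (t₁ t₂ t₃ t₄ t₅ : ℝ) (t : Sym2 (Fin 6) → ℝ)
    (he₁ : t s(0, 2) = t₁) (he₂ : t s(0, 3) = t₂) (he₃ : t s(0, 1) = t₃)
    (he₄ : t s(1, 4) = t₄) (he₅ : t s(1, 5) = t₅) (S : ℝ) :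
    Bcount GammaH 1 t S = ∑ J : Finset (Fin 5),
      (if DJ J then (3 : ℤ) - (((J.map eEmb).filter (fun e => (1 : Fin 6) ∈ e)).card : ℤ)
        else 0) * (PP t₁ t₂ t₃ t₄ t₅ S J : ℤ) := by
  rw [Bcount]
  rw [← Finset.sum_subset (Finset.subset_univ E5.powerset) (fun F _ hF => by
    rw [if_neg]
    rintro ⟨⟨hsub, _⟩, _⟩
    rw [hedge] at hsub
    exact hF (Finset.mem_powerset.2 (Finset.coe_subset.1 hsub)))]
  rw [hE5map, powerset_map_eq eEmb]
  rw [Finset.sum_image (fun x _ y _ h => Finset.map_injective eEmb h)]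
  rw [Finset.powerset_univ]
  refine Finset.sum_congr rfl (fun K _ => ?_)
  by_cases h : DJ K
  · rw [if_pos ((COND K).2 h), if_pos h, hdeg,
      count_eq t₁ t₂ t₃ t₄ t₅ t he₁ he₂ he₃ he₄ he₅ S K]
    norm_num
  · rw [if_neg (fun hc => h ((COND K).1 hc)), if_neg h, zero_mul]

end HMain


-- appended pieces: embeddings, equivs, KEY
namespace HMain

def emb01 : Fin 2 ↪ Fin 5 := ⟨![0,1], by decide⟩
def emb0123 : Fin 4 ↪ Fin 5 := ⟨![0,1,2,3], by decide⟩
def emb0124 : Fin 4 ↪ Fin 5 := ⟨![0,1,2,4], by decide⟩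
def emb0134 : Fin 4 ↪ Fin 5 := ⟨![0,1,3,4], by decide⟩
def emb013 : Fin 3 ↪ Fin 5 := ⟨![0,1,3], by decide⟩
def emb014 : Fin 3 ↪ Fin 5 := ⟨![0,1,4], by decide⟩

def eP3 : ℕ × ℕ × ℕ ≃ (Fin 3 → ℕ) where
  toFun p := ![p.1, p.2.1, p.2.2]
  invFun n := (n 0, n 1, n 2)
  left_inv p := rfl
  right_inv n := by funext i; fin_cases i <;> rfl

def eP4 : ℕ × ℕ × ℕ × ℕ ≃ (Fin 4 → ℕ) where
  toFun p := ![p.1, p.2.1, p.2.2.1, p.2.2.2]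
  invFun n := (n 0, n 1, n 2, n 3)
  left_inv p := rfl
  right_inv n := by funext i; fin_cases i <;> rfl

lemma KEY : ∀ J : Finset (Fin 5),
    (if DJ J then (3 : ℤ) - (((J.map eEmb).filter (fun e => (1 : Fin 6) ∈ e)).card : ℤ)
        else 0)
      + 2 * (if J ⊆ ({0,1} : Finset (Fin 5)) then 1 else 0)
      + 2 * (if 3 ∈ J ∧ (0 ∈ J ∨ 1 ∈ J) ∧ J ⊆ ({0,1,3} : Finset (Fin 5)) then 1 else 0)
      + 2 * (if 4 ∈ J ∧ (0 ∈ J ∨ 1 ∈ J) ∧ J ⊆ ({0,1,4} : Finset (Fin 5)) then 1 else 0)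
      + (if 3 ∈ J ∧ 4 ∈ J ∧ (0 ∈ J ∨ 1 ∈ J) ∧ J ⊆ ({0,1,3,4} : Finset (Fin 5)) then 1 else 0)
    = (if J ⊆ ({0,1,2,3} : Finset (Fin 5)) then 1 else 0)
      + (if J ⊆ ({0,1,2,4} : Finset (Fin 5)) then 1 else 0)
      + (if J ⊆ ({0,1,3,4} : Finset (Fin 5)) then 1 else 0)
      - (if J ⊆ ({0,1} : Finset (Fin 5)) then 1 else 0) := by decide

end HMain

open HMain HAux in
/-- with `S := T - t₃`,
`B(Γ_H, B, S) + 2·W(2t₁,2t₂;S)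
  + 2·#{(n₁,n₂,n₄) : n₄ ≥ 1, n₁+n₂ ≥ 1, 2n₁t₁+2n₂t₂+2n₄t₄ ≤ S}
  + 2·#{(n₁,n₂,n₅) : n₅ ≥ 1, n₁+n₂ ≥ 1, 2n₁t₁+2n₂t₂+2n₅t₅ ≤ S}
  + #{(n₁,n₂,n₄,n₅) : n₄ ≥ 1, n₅ ≥ 1, n₁+n₂ ≥ 1, 2n₁t₁+2n₂t₂+2n₄t₄+2n₅t₅ ≤ S}
 = W(2t₁,2t₂,2t₃,2t₄;S) + W(2t₁,2t₂,2t₃,2t₅;S) + W(2t₁,2t₂,2t₄,2t₅;S) − W(2t₁,2t₂;S)`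
(the left-hand side is the number `N(Γ_H, A, B, T)` of new points born at `B` up to time `T`
for a point starting from `A`). -/
theorem N_A_B_eq (t₁ t₂ t₃ t₄ t₅ : ℝ)
    (h₁ : 0 < t₁) (h₂ : 0 < t₂) (h₃ : 0 < t₃) (h₄ : 0 < t₄) (h₅ : 0 < t₅)
    (t : Sym2 (Fin 6) → ℝ)
    (he₁ : t s(0, 2) = t₁) (he₂ : t s(0, 3) = t₂) (he₃ : t s(0, 1) = t₃)
    (he₄ : t s(1, 4) = t₄) (he₅ : t s(1, 5) = t₅)
    (T : ℝ) :
    Bcount GammaH 1 t (T - t₃)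
      + 2 * (W ![2*t₁, 2*t₂] (T - t₃) : ℤ)
      + 2 * (Nat.card {p : ℕ × ℕ × ℕ | 1 ≤ p.2.2 ∧ 1 ≤ p.1 + p.2.1 ∧
          2*(p.1 : ℝ)*t₁ + 2*(p.2.1 : ℝ)*t₂ + 2*(p.2.2 : ℝ)*t₄ ≤ T - t₃} : ℤ)
      + 2 * (Nat.card {p : ℕ × ℕ × ℕ | 1 ≤ p.2.2 ∧ 1 ≤ p.1 + p.2.1 ∧
          2*(p.1 : ℝ)*t₁ + 2*(p.2.1 : ℝ)*t₂ + 2*(p.2.2 : ℝ)*t₅ ≤ T - t₃} : ℤ)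
      + (Nat.card {p : ℕ × ℕ × ℕ × ℕ | 1 ≤ p.2.2.1 ∧ 1 ≤ p.2.2.2 ∧ 1 ≤ p.1 + p.2.1 ∧
          2*(p.1 : ℝ)*t₁ + 2*(p.2.1 : ℝ)*t₂ + 2*(p.2.2.1 : ℝ)*t₄
            + 2*(p.2.2.2 : ℝ)*t₅ ≤ T - t₃} : ℤ)
      = (W ![2*t₁, 2*t₂, 2*t₃, 2*t₄] (T - t₃) : ℤ)
        + (W ![2*t₁, 2*t₂, 2*t₃, 2*t₅] (T - t₃) : ℤ)
        + (W ![2*t₁, 2*t₂, 2*t₄, 2*t₅] (T - t₃) : ℤ)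
        - (W ![2*t₁, 2*t₂] (T - t₃) : ℤ) := by
  have hB := Bpart t₁ t₂ t₃ t₄ t₅ t he₁ he₂ he₃ he₄ he₅ (T - t₃)
  -- W with two variables
  have hW2 : (W ![2*t₁, 2*t₂] (T - t₃) : ℤ) = ∑ J : Finset (Fin 5),
      (if J ⊆ ({0,1} : Finset (Fin 5)) then 1 else 0 : ℤ) * PP t₁ t₂ t₃ t₄ t₅ (T - t₃) J := by
    rw [W, show {n : Fin 2 → ℕ | ∑ i, (n i : ℝ) * ![2*t₁, 2*t₂] i ≤ T - t₃}
        = {n : Fin 2 → ℕ | (fun _ : Finset (Fin 2) => True) (supp n) ∧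
            ∑ i, (n i : ℝ) * ![2*t₁, 2*t₂] i ≤ T - t₃} from by ext n; simp]
    exact master t₁ t₂ t₃ t₄ t₅ (T - t₃) emb01 ![2*t₁, 2*t₂]
      (by intro a; fin_cases a <;> simp [s5, emb01])
      (by intro a; fin_cases a <;> simp <;> linarith)
      (fun _ => True) (fun J => J ⊆ ({0,1} : Finset (Fin 5))) (by decide) (by decide)
  have hW1234 : (W ![2*t₁, 2*t₂, 2*t₃, 2*t₄] (T - t₃) : ℤ) = ∑ J : Finset (Fin 5),
      (if J ⊆ ({0,1,2,3} : Finset (Fin 5)) then 1 else 0 : ℤ)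
        * PP t₁ t₂ t₃ t₄ t₅ (T - t₃) J := by
    rw [W, show {n : Fin 4 → ℕ | ∑ i, (n i : ℝ) * ![2*t₁, 2*t₂, 2*t₃, 2*t₄] i ≤ T - t₃}
        = {n : Fin 4 → ℕ | (fun _ : Finset (Fin 4) => True) (supp n) ∧
            ∑ i, (n i : ℝ) * ![2*t₁, 2*t₂, 2*t₃, 2*t₄] i ≤ T - t₃} from by ext n; simp]
    exact master t₁ t₂ t₃ t₄ t₅ (T - t₃) emb0123 ![2*t₁, 2*t₂, 2*t₃, 2*t₄]
      (by intro a; fin_cases a <;> simp [s5, emb0123])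
      (by intro a; fin_cases a <;> simp <;> linarith)
      (fun _ => True) (fun J => J ⊆ ({0,1,2,3} : Finset (Fin 5))) (by decide) (by decide)
  have hW1235 : (W ![2*t₁, 2*t₂, 2*t₃, 2*t₅] (T - t₃) : ℤ) = ∑ J : Finset (Fin 5),
      (if J ⊆ ({0,1,2,4} : Finset (Fin 5)) then 1 else 0 : ℤ)
        * PP t₁ t₂ t₃ t₄ t₅ (T - t₃) J := by
    rw [W, show {n : Fin 4 → ℕ | ∑ i, (n i : ℝ) * ![2*t₁, 2*t₂, 2*t₃, 2*t₅] i ≤ T - t₃}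
        = {n : Fin 4 → ℕ | (fun _ : Finset (Fin 4) => True) (supp n) ∧
            ∑ i, (n i : ℝ) * ![2*t₁, 2*t₂, 2*t₃, 2*t₅] i ≤ T - t₃} from by ext n; simp]
    exact master t₁ t₂ t₃ t₄ t₅ (T - t₃) emb0124 ![2*t₁, 2*t₂, 2*t₃, 2*t₅]
      (by intro a; fin_cases a <;> simp [s5, emb0124])
      (by intro a; fin_cases a <;> simp <;> linarith)
      (fun _ => True) (fun J => J ⊆ ({0,1,2,4} : Finset (Fin 5))) (by decide) (by decide)
  have hW1245 : (W ![2*t₁, 2*t₂, 2*t₄, 2*t₅] (T - t₃) : ℤ) = ∑ J : Finset (Fin 5),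
      (if J ⊆ ({0,1,3,4} : Finset (Fin 5)) then 1 else 0 : ℤ)
        * PP t₁ t₂ t₃ t₄ t₅ (T - t₃) J := by
    rw [W, show {n : Fin 4 → ℕ | ∑ i, (n i : ℝ) * ![2*t₁, 2*t₂, 2*t₄, 2*t₅] i ≤ T - t₃}
        = {n : Fin 4 → ℕ | (fun _ : Finset (Fin 4) => True) (supp n) ∧
            ∑ i, (n i : ℝ) * ![2*t₁, 2*t₂, 2*t₄, 2*t₅] i ≤ T - t₃} from by ext n; simp]
    exact master t₁ t₂ t₃ t₄ t₅ (T - t₃) emb0134 ![2*t₁, 2*t₂, 2*t₄, 2*t₅]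
      (by intro a; fin_cases a <;> simp [s5, emb0134])
      (by intro a; fin_cases a <;> simp <;> linarith)
      (fun _ => True) (fun J => J ⊆ ({0,1,3,4} : Finset (Fin 5))) (by decide) (by decide)
  -- triple with t₄
  have hP4 : (Nat.card {p : ℕ × ℕ × ℕ | 1 ≤ p.2.2 ∧ 1 ≤ p.1 + p.2.1 ∧
        2*(p.1 : ℝ)*t₁ + 2*(p.2.1 : ℝ)*t₂ + 2*(p.2.2 : ℝ)*t₄ ≤ T - t₃} : ℤ)
      = ∑ J : Finset (Fin 5),
        (if 3 ∈ J ∧ (0 ∈ J ∨ 1 ∈ J) ∧ J ⊆ ({0,1,3} : Finset (Fin 5)) then 1 else 0 : ℤ)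
          * PP t₁ t₂ t₃ t₄ t₅ (T - t₃) J := by
    have hcongr : Nat.card {p : ℕ × ℕ × ℕ | 1 ≤ p.2.2 ∧ 1 ≤ p.1 + p.2.1 ∧
          2*(p.1 : ℝ)*t₁ + 2*(p.2.1 : ℝ)*t₂ + 2*(p.2.2 : ℝ)*t₄ ≤ T - t₃}
        = Nat.card {n : Fin 3 → ℕ | (2 ∈ supp n ∧ (0 ∈ supp n ∨ 1 ∈ supp n)) ∧
            ∑ a, (n a : ℝ) * ![2*t₁, 2*t₂, 2*t₄] a ≤ T - t₃} := by
      refine Nat.card_congr (Equiv.subtypeEquiv eP3 (fun p => ?_))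
      have v0 : eP3 p 0 = p.1 := rfl
      have v1 : eP3 p 1 = p.2.1 := rfl
      have v2 : eP3 p 2 = p.2.2 := rfl
      simp only [Set.mem_setOf_eq, supp, Finset.mem_filter, Finset.mem_univ, true_and,
        Fin.sum_univ_three, v0, v1, v2, Matrix.cons_val_zero, Matrix.cons_val_one,
        Matrix.head_cons, Matrix.cons_val_two, Matrix.tail_cons]
      constructor
      · rintro ⟨hx1, hx2, hx3⟩
        exact ⟨⟨by omega, by omega⟩, by linarith⟩
      · rintro ⟨⟨hx1, hx2⟩, hx3⟩
        exact ⟨by omega, by omega, by linarith⟩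
    rw [hcongr]
    exact master t₁ t₂ t₃ t₄ t₅ (T - t₃) emb013 ![2*t₁, 2*t₂, 2*t₄]
      (by intro a; fin_cases a <;> simp [s5, emb013])
      (by intro a; fin_cases a <;> simp <;> linarith)
      (fun K => 2 ∈ K ∧ (0 ∈ K ∨ 1 ∈ K))
      (fun J => 3 ∈ J ∧ (0 ∈ J ∨ 1 ∈ J) ∧ J ⊆ ({0,1,3} : Finset (Fin 5)))
      (by decide) (by decide)
  -- triple with t₅
  have hP5 : (Nat.card {p : ℕ × ℕ × ℕ | 1 ≤ p.2.2 ∧ 1 ≤ p.1 + p.2.1 ∧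
        2*(p.1 : ℝ)*t₁ + 2*(p.2.1 : ℝ)*t₂ + 2*(p.2.2 : ℝ)*t₅ ≤ T - t₃} : ℤ)
      = ∑ J : Finset (Fin 5),
        (if 4 ∈ J ∧ (0 ∈ J ∨ 1 ∈ J) ∧ J ⊆ ({0,1,4} : Finset (Fin 5)) then 1 else 0 : ℤ)
          * PP t₁ t₂ t₃ t₄ t₅ (T - t₃) J := by
    have hcongr : Nat.card {p : ℕ × ℕ × ℕ | 1 ≤ p.2.2 ∧ 1 ≤ p.1 + p.2.1 ∧
          2*(p.1 : ℝ)*t₁ + 2*(p.2.1 : ℝ)*t₂ + 2*(p.2.2 : ℝ)*t₅ ≤ T - t₃}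
        = Nat.card {n : Fin 3 → ℕ | (2 ∈ supp n ∧ (0 ∈ supp n ∨ 1 ∈ supp n)) ∧
            ∑ a, (n a : ℝ) * ![2*t₁, 2*t₂, 2*t₅] a ≤ T - t₃} := by
      refine Nat.card_congr (Equiv.subtypeEquiv eP3 (fun p => ?_))
      have v0 : eP3 p 0 = p.1 := rfl
      have v1 : eP3 p 1 = p.2.1 := rfl
      have v2 : eP3 p 2 = p.2.2 := rfl
      simp only [Set.mem_setOf_eq, supp, Finset.mem_filter, Finset.mem_univ, true_and,
        Fin.sum_univ_three, v0, v1, v2, Matrix.cons_val_zero, Matrix.cons_val_one,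
        Matrix.head_cons, Matrix.cons_val_two, Matrix.tail_cons]
      constructor
      · rintro ⟨hx1, hx2, hx3⟩
        exact ⟨⟨by omega, by omega⟩, by linarith⟩
      · rintro ⟨⟨hx1, hx2⟩, hx3⟩
        exact ⟨by omega, by omega, by linarith⟩
    rw [hcongr]
    exact master t₁ t₂ t₃ t₄ t₅ (T - t₃) emb014 ![2*t₁, 2*t₂, 2*t₅]
      (by intro a; fin_cases a <;> simp [s5, emb014])
      (by intro a; fin_cases a <;> simp <;> linarith)
      (fun K => 2 ∈ K ∧ (0 ∈ K ∨ 1 ∈ K))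
      (fun J => 4 ∈ J ∧ (0 ∈ J ∨ 1 ∈ J) ∧ J ⊆ ({0,1,4} : Finset (Fin 5)))
      (by decide) (by decide)
  -- quadruple
  have hP45 : (Nat.card {p : ℕ × ℕ × ℕ × ℕ | 1 ≤ p.2.2.1 ∧ 1 ≤ p.2.2.2 ∧ 1 ≤ p.1 + p.2.1 ∧
        2*(p.1 : ℝ)*t₁ + 2*(p.2.1 : ℝ)*t₂ + 2*(p.2.2.1 : ℝ)*t₄
          + 2*(p.2.2.2 : ℝ)*t₅ ≤ T - t₃} : ℤ)
      = ∑ J : Finset (Fin 5),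
        (if 3 ∈ J ∧ 4 ∈ J ∧ (0 ∈ J ∨ 1 ∈ J) ∧ J ⊆ ({0,1,3,4} : Finset (Fin 5))
          then 1 else 0 : ℤ) * PP t₁ t₂ t₃ t₄ t₅ (T - t₃) J := by
    have hcongr : Nat.card {p : ℕ × ℕ × ℕ × ℕ | 1 ≤ p.2.2.1 ∧ 1 ≤ p.2.2.2 ∧ 1 ≤ p.1 + p.2.1 ∧
          2*(p.1 : ℝ)*t₁ + 2*(p.2.1 : ℝ)*t₂ + 2*(p.2.2.1 : ℝ)*t₄
            + 2*(p.2.2.2 : ℝ)*t₅ ≤ T - t₃}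
        = Nat.card {n : Fin 4 → ℕ | (2 ∈ supp n ∧ 3 ∈ supp n ∧ (0 ∈ supp n ∨ 1 ∈ supp n)) ∧
            ∑ a, (n a : ℝ) * ![2*t₁, 2*t₂, 2*t₄, 2*t₅] a ≤ T - t₃} := by
      refine Nat.card_congr (Equiv.subtypeEquiv eP4 (fun p => ?_))
      have v0 : eP4 p 0 = p.1 := rfl
      have v1 : eP4 p 1 = p.2.1 := rfl
      have v2 : eP4 p 2 = p.2.2.1 := rfl
      have v3 : eP4 p 3 = p.2.2.2 := rfl
      have w3 : (![2*t₁, 2*t₂, 2*t₄, 2*t₅] : Fin 4 → ℝ) 3 = 2*t₅ := rfl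
      simp only [Set.mem_setOf_eq, supp, Finset.mem_filter, Finset.mem_univ, true_and,
        Fin.sum_univ_four, v0, v1, v2, v3, w3, Matrix.cons_val_zero, Matrix.cons_val_one,
        Matrix.head_cons, Matrix.cons_val_two, Matrix.tail_cons]
      constructor
      · rintro ⟨hx1, hx2, hx3, hx4⟩
        exact ⟨⟨by omega, by omega, by omega⟩, by linarith⟩
      · rintro ⟨⟨hx1, hx2, hx3⟩, hx4⟩
        exact ⟨by omega, by omega, by omega, by linarith⟩
    rw [hcongr]
    exact master t₁ t₂ t₃ t₄ t₅ (T - t₃) emb0134 ![2*t₁, 2*t₂, 2*t₄, 2*t₅]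
      (by intro a; fin_cases a <;> simp [s5, emb0134])
      (by intro a; fin_cases a <;> simp <;> linarith)
      (fun K => 2 ∈ K ∧ 3 ∈ K ∧ (0 ∈ K ∨ 1 ∈ K))
      (fun J => 3 ∈ J ∧ 4 ∈ J ∧ (0 ∈ J ∨ 1 ∈ J) ∧ J ⊆ ({0,1,3,4} : Finset (Fin 5)))
      (by decide) (by decide)
  rw [hB, hW2, hW1234, hW1235, hW1245, hP4, hP5, hP45]
  simp only [Finset.mul_sum, ← Finset.sum_add_distrib, ← Finset.sum_sub_distrib]
  refine Finset.sum_congr rfl (fun J _ => ?_)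
  linear_combination (PP t₁ t₂ t₃ t₄ t₅ (T - t₃) J : ℤ) * KEY J
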